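/- arXiv:math/0611840 — 4 statements merged into one kernel-verified Lean document; each statement's English description precedes it below -/
import Mathlib

section
/- Let b = (b_i^ρ) satisfy the commutation relations b_j^{ρρ_i} b_i^ρ = b_i^{ρρ_j} b_j^ρ, and let M_b = ⟨x_i e_ρ − b_i^ρ e_{ρρ_i} : 1 ≤ i ≤ n, ρ ∈ G*⟩ ⊆ A. Then the quotient A/M_b has G*-graded Hilbert function identically equal to 1: dim_k (A/M_b)_ρ = 1 for every ρ ∈ G*. -/
open MvPolynomial

section

variable {k : Type*} [Field k] {G : Type*} [CommGroup G] {n : ℕ}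

/-- The free `S`-module `A = ⊕_{ρ ∈ G*} S e_ρ`, with `G* = Hom(G, kˣ)`. -/
abbrev Acar (k : Type*) [Field k] (G : Type*) [CommGroup G] (n : ℕ) :=
  (G →* kˣ) →₀ MvPolynomial (Fin n) k

/-- The `G*`-degree of a monomial exponent vector: `deg(x^u) = ∏ χᵢ^{uᵢ}`. -/
def degMon (χ : Fin n → G →* kˣ) (u : Fin n →₀ ℕ) : G →* kˣ :=
  u.prod fun i e => χ i ^ e

/-- The generator `x_i e_ρ − b_i^ρ e_{ρρ_i}` of the left `A`-ideal `M_b`. -/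
noncomputable def gen (χ : Fin n → G →* kˣ) (b : Fin n → (G →* kˣ) → k)
    (i : Fin n) (ρ : G →* kˣ) : Acar k G n :=
  Finsupp.single ρ (X i) - Finsupp.single (ρ * χ i) (C (b i ρ))

/-- The submodule `M_b ⊆ A` generated by the `x_i e_ρ − b_i^ρ e_{ρρ_i}`. -/
noncomputable def Mb (χ : Fin n → G →* kˣ) (b : Fin n → (G →* kˣ) → k) :
    Submodule (MvPolynomial (Fin n) k) (Acar k G n) :=
  Submodule.span _ (Set.range fun p : Fin n × (G →* kˣ) => gen χ b p.1 p.2)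

/-- The degree-`ρ` homogeneous component of `A`: the `k`-span of the monomials
`x^u e_σ` with `deg(x^u) σ = ρ`. -/
noncomputable def homPiece (k : Type*) [Field k] (χ : Fin n → G →* kˣ) (ρ : G →* kˣ) :
    Submodule k (Acar k G n) :=
  Submodule.span k {f | ∃ (u : Fin n →₀ ℕ) (σ : G →* kˣ),
    degMon χ u * σ = ρ ∧ f = Finsupp.single σ (monomial u 1)}

/-! ### Auxiliary lemmas on `MvPolynomial` -/

lemma X_eq_monomial' (i : Fin n) :
    (X i : MvPolynomial (Fin n) k) = monomial (Finsupp.single i 1) 1 := rfl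

lemma monomial_zero_one_eq_one :
    (monomial (0 : Fin n →₀ ℕ) (1 : k)) = (1 : MvPolynomial (Fin n) k) := by
  rw [← C_apply, C_1]

lemma X_mul_monomial' (i : Fin n) (u : Fin n →₀ ℕ) (c : k) :
    (X i : MvPolynomial (Fin n) k) * monomial u c = monomial (u + Finsupp.single i 1) c := by
  rw [X_eq_monomial', monomial_mul, one_mul, add_comm (Finsupp.single i 1) u]

lemma monomial_mul_X' (u : Fin n →₀ ℕ) (c : k) (i : Fin n) :
    monomial u c * (X i : MvPolynomial (Fin n) k) = monomial (u + Finsupp.single i 1) c := by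
  rw [X_eq_monomial', monomial_mul, mul_one]

/-! ### Smul computations in `Acar` -/

lemma smul_single_poly (p q : MvPolynomial (Fin n) k) (τ : G →* kˣ) :
    p • Finsupp.single τ q = Finsupp.single τ (p * q) :=
  Finsupp.smul_single' p τ q

lemma ksmul_single (c : k) (p : MvPolynomial (Fin n) k) (τ : G →* kˣ) :
    c • Finsupp.single τ p = Finsupp.single τ (C c * p) := by
  rw [Finsupp.smul_single, smul_eq_C_mul]

/-! ### Word weights -/

variable (χ : Fin n → G →* kˣ) (b : Fin n → (G →* kˣ) → k)

/-- The weight of a word of variable indices, starting at character `σ`: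
`Wl σ [i₁, …, im] = b_{i₁}^σ b_{i₂}^{σχ_{i₁}} ⋯`. -/
noncomputable def Wl : (G →* kˣ) → List (Fin n) → k
  | _, [] => 1
  | σ, i :: l => b i σ * Wl (σ * χ i) l

@[simp] lemma Wl_nil (σ : G →* kˣ) : Wl χ b σ [] = 1 := rfl

@[simp] lemma Wl_cons (σ : G →* kˣ) (i : Fin n) (l : List (Fin n)) :
    Wl χ b σ (i :: l) = b i σ * Wl χ b (σ * χ i) l := rfl

/-- The `G*`-degree of a word of variable indices. -/
def degL : List (Fin n) → (G →* kˣ)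
  | [] => 1
  | i :: l => χ i * degL l

@[simp] lemma degL_nil : degL χ ([] : List (Fin n)) = 1 := rfl

@[simp] lemma degL_cons (i : Fin n) (l : List (Fin n)) :
    degL χ (i :: l) = χ i * degL χ l := rfl

variable {χ b}

lemma degL_perm {l l' : List (Fin n)} (h : l.Perm l') : degL χ l = degL χ l' := by
  induction h with
  | nil => rfl
  | cons x _ ih => rw [degL_cons, degL_cons, ih]
  | swap x y t => exact mul_left_comm (χ y) (χ x) (degL χ t)
  | trans _ _ ih1 ih2 => rw [ih1, ih2]

lemma Wl_perm (hb : ∀ (i j : Fin n) (ρ : G →* kˣ),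
      b j (ρ * χ i) * b i ρ = b i (ρ * χ j) * b j ρ)
    {l l' : List (Fin n)} (h : l.Perm l') : ∀ σ, Wl χ b σ l = Wl χ b σ l' := by
  induction h with
  | nil => intro σ; rfl
  | cons x _ ih => intro σ; rw [Wl_cons, Wl_cons, ih]
  | swap x y t =>
      intro σ
      have harg : σ * χ y * χ x = σ * χ x * χ y := mul_right_comm σ (χ y) (χ x)
      rw [Wl_cons, Wl_cons, Wl_cons, Wl_cons, harg, ← mul_assoc, ← mul_assoc,
        mul_comm (b y σ) (b x (σ * χ y)), hb y x σ, mul_comm (b y (σ * χ x)) (b x σ)]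
  | trans _ _ ih1 ih2 => intro σ; rw [ih1, ih2]

lemma Wl_append_singleton : ∀ (l : List (Fin n)) (σ : G →* kˣ) (i : Fin n),
    Wl χ b σ (l ++ [i]) = Wl χ b σ l * b i (σ * degL χ l) := by
  intro l
  induction l with
  | nil =>
      intro σ i
      rw [List.nil_append, Wl_cons, Wl_nil, Wl_nil, mul_one, one_mul, degL_nil]
      congr 1
      exact (mul_one σ).symm
  | cons j t ih =>
      intro σ i
      have ha : σ * χ j * degL χ t = σ * degL χ (j :: t) := by
        rw [degL_cons]
        exact mul_assoc σ (χ j) (degL χ t)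
      rw [List.cons_append, Wl_cons, ih, Wl_cons, ha, mul_assoc]

variable (χ b)

/-- The canonical word associated to an exponent vector. -/
def toL (u : Fin n →₀ ℕ) : List (Fin n) :=
  (List.finRange n).flatMap fun i => List.replicate (u i) i

lemma count_toL (u : Fin n →₀ ℕ) (j : Fin n) : (toL u).count j = u j := by
  unfold toL
  rw [List.count_flatMap]
  have h : (List.count j ∘ fun i => List.replicate (u i) i)
      = fun i => if j = i then u i else 0 := by
    funext i
    rw [Function.comp_apply, List.count_replicate]
    by_cases h' : i = j
    · subst h'; simp
    · simp [h', Ne.symm h']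
  rw [h, ← Fin.sum_univ_def]
  simp

@[simp] lemma toL_zero : toL (0 : Fin n →₀ ℕ) = [] := by
  simp [toL]

lemma toL_add_single (u : Fin n →₀ ℕ) (i : Fin n) :
    (toL (u + Finsupp.single i 1)).Perm (i :: toL u) := by
  rw [List.perm_iff_count]
  intro j
  rw [count_toL, List.count_cons, count_toL]
  simp only [Finsupp.add_apply, Finsupp.single_apply, beq_iff_eq]

/-- The weight of a monomial. -/
noncomputable def Wfn (σ : G →* kˣ) (u : Fin n →₀ ℕ) : k := Wl χ b σ (toL u)

@[simp] lemma Wfn_zero (σ : G →* kˣ) : Wfn χ b σ 0 = 1 := by simp [Wfn]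

lemma degMon_mul (u v : Fin n →₀ ℕ) : degMon χ (u + v) = degMon χ u * degMon χ v := by
  unfold degMon
  exact Finsupp.prod_add_index (fun i _ => pow_zero (χ i)) (fun i _ m m' => pow_add (χ i) m m')

lemma degMon_single_one (i : Fin n) : degMon χ (Finsupp.single i 1) = χ i := by
  unfold degMon
  rw [Finsupp.prod_single_index (h := fun j e => χ j ^ e) (pow_zero (χ i))]
  exact pow_one (χ i)

lemma degMon_add_single (u : Fin n →₀ ℕ) (i : Fin n) :
    degMon χ (u + Finsupp.single i 1) = degMon χ u * χ i := by
  rw [degMon_mul, degMon_single_one]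

lemma degMon_zero : degMon χ (0 : Fin n →₀ ℕ) = 1 := Finsupp.prod_zero_index

lemma degL_toL (u : Fin n →₀ ℕ) : degL χ (toL u) = degMon χ u := by
  induction u using Finsupp.induction with
  | zero => rw [toL_zero, degL_nil]; exact (degMon_zero χ).symm
  | single_add i m u' hiu' hm ih =>
      have main : ∀ m' : ℕ,
          degL χ (toL (u' + Finsupp.single i m')) = degMon χ (u' + Finsupp.single i m') := by
        intro m'
        induction m' with
        | zero => simpa using ih
        | succ m'' ih2 =>
            have h : u' + Finsupp.single i (m'' + 1)
                = (u' + Finsupp.single i m'') + Finsupp.single i 1 := by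
              rw [add_assoc, ← Finsupp.single_add]
            rw [h, degMon_add_single, degL_perm (toL_add_single (u' + Finsupp.single i m'') i),
              degL_cons, ih2]
            exact mul_comm (χ i) (degMon χ (u' + Finsupp.single i m''))
      rw [show Finsupp.single i m + u' = u' + Finsupp.single i m from add_comm _ _]
      exact main m

variable {χ b}

lemma Wfn_add_single_left (hb : ∀ (i j : Fin n) (ρ : G →* kˣ),
      b j (ρ * χ i) * b i ρ = b i (ρ * χ j) * b j ρ)
    (σ : G →* kˣ) (u : Fin n →₀ ℕ) (i : Fin n) :
    Wfn χ b σ (u + Finsupp.single i 1) = b i σ * Wfn χ b (σ * χ i) u := by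
  unfold Wfn
  rw [Wl_perm hb (toL_add_single u i), Wl_cons]

lemma Wfn_add_single_right (hb : ∀ (i j : Fin n) (ρ : G →* kˣ),
      b j (ρ * χ i) * b i ρ = b i (ρ * χ j) * b j ρ)
    (σ : G →* kˣ) (u : Fin n →₀ ℕ) (i : Fin n) :
    Wfn χ b σ (u + Finsupp.single i 1) = Wfn χ b σ u * b i (σ * degMon χ u) := by
  have hperm : (toL (u + Finsupp.single i 1)).Perm (toL u ++ [i]) :=
    (toL_add_single u i).trans (List.perm_append_singleton i (toL u)).symm
  unfold Wfn
  rw [Wl_perm hb hperm, Wl_append_singleton, degL_toL]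

/-! ### The functional `φ` -/

variable (χ b) in
/-- The `k`-linear functional `φ(x^u e_σ) = W(σ, u)`. -/
noncomputable def phiF : Acar k G n →ₗ[k] k :=
  Finsupp.lsum k fun σ => (Finsupp.linearCombination k (Wfn χ b σ)).comp
    (AddMonoidAlgebra.coeffLinearEquiv k).toLinearMap

lemma phiF_single (σ : G →* kˣ) (u : Fin n →₀ ℕ) (c : k) :
    phiF χ b (Finsupp.single σ (monomial u c)) = c * Wfn χ b σ u := by
  unfold phiF
  rw [Finsupp.lsum_single]
  simp [MvPolynomial.monomial]

lemma phiF_Mb (hb : ∀ (i j : Fin n) (ρ : G →* kˣ),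
      b j (ρ * χ i) * b i ρ = b i (ρ * χ j) * b j ρ)
    {x : Acar k G n} (hx : x ∈ Mb χ b) : phiF χ b x = 0 := by
  have key : ∀ y ∈ Mb χ b, ∀ p : MvPolynomial (Fin n) k, phiF χ b (p • y) = 0 := by
    intro y hy
    induction hy using Submodule.span_induction with
    | mem y hy =>
        obtain ⟨⟨i, τ⟩, rfl⟩ := hy
        intro p
        induction p using MvPolynomial.induction_on' with
        | monomial u a =>
            have h1 : (monomial u a) • gen χ b i τ =
                Finsupp.single τ (monomial (u + Finsupp.single i 1) a)
                  - Finsupp.single (τ * χ i) (monomial u (a * b i τ)) := by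
              unfold gen
              rw [smul_sub, smul_single_poly, smul_single_poly, monomial_mul_X',
                C_apply, monomial_mul, add_zero]
            rw [h1, map_sub, phiF_single, phiF_single,
              Wfn_add_single_left hb, sub_eq_zero]
            ring
        | add p q hp hq =>
            rw [add_smul, map_add, hp, hq, add_zero]
    | zero => intro p; rw [smul_zero, map_zero]
    | add y z _ _ hy hz => intro p; rw [smul_add, map_add, hy, hz, add_zero]
    | smul q y _ hy => intro p; rw [smul_smul]; exact hy _
  simpa using key x hx 1

/-! ### The congruence `x^u e_σ ≡ W(σ,u) e_{σ·deg u}  mod M_b` -/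

lemma cong_step (hb : ∀ (i j : Fin n) (ρ : G →* kˣ),
      b j (ρ * χ i) * b i ρ = b i (ρ * χ j) * b j ρ)
    {u : Fin n →₀ ℕ} {σ : G →* kˣ} (i : Fin n)
    (H : Finsupp.single σ (monomial u 1)
        - Wfn χ b σ u • Finsupp.single (σ * degMon χ u) (1 : MvPolynomial (Fin n) k)
        ∈ Mb χ b) :
    Finsupp.single σ (monomial (u + Finsupp.single i 1) 1)
      - Wfn χ b σ (u + Finsupp.single i 1) •
        Finsupp.single (σ * degMon χ (u + Finsupp.single i 1)) (1 : MvPolynomial (Fin n) k)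
      ∈ Mb χ b := by
  have h1 : (X i : MvPolynomial (Fin n) k) •
      (Finsupp.single σ (monomial u 1)
        - Wfn χ b σ u • Finsupp.single (σ * degMon χ u) (1 : MvPolynomial (Fin n) k))
      ∈ Mb χ b := Submodule.smul_mem _ _ H
  have h2 : Wfn χ b σ u • gen χ b i (σ * degMon χ u) ∈ Mb χ b :=
    Submodule.smul_of_tower_mem _ _ (Submodule.subset_span ⟨(i, σ * degMon χ u), rfl⟩)
  have h3 := Submodule.add_mem _ h1 h2
  have hidx : σ * degMon χ (u + Finsupp.single i 1) = σ * degMon χ u * χ i := by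
    rw [degMon_add_single]
    exact (mul_assoc σ (degMon χ u) (χ i)).symm
  have e1 : (X i : MvPolynomial (Fin n) k) • Finsupp.single σ (monomial u (1 : k))
      = Finsupp.single σ (monomial (u + Finsupp.single i 1) (1 : k)) := by
    rw [smul_single_poly, X_mul_monomial']
  have e2 : (X i : MvPolynomial (Fin n) k) •
        (Wfn χ b σ u • Finsupp.single (σ * degMon χ u) (1 : MvPolynomial (Fin n) k))
      = Finsupp.single (σ * degMon χ u) (monomial (Finsupp.single i 1) (Wfn χ b σ u)) := by
    rw [ksmul_single, mul_one, C_apply, smul_single_poly, X_mul_monomial', zero_add]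
  have e3 : Wfn χ b σ u • gen χ b i (σ * degMon χ u)
      = Finsupp.single (σ * degMon χ u) (monomial (Finsupp.single i 1) (Wfn χ b σ u))
        - Finsupp.single (σ * degMon χ u * χ i)
            (monomial 0 (Wfn χ b σ u * b i (σ * degMon χ u))) := by
    unfold gen
    rw [smul_sub, ksmul_single, ksmul_single, X_eq_monomial', C_mul_monomial, mul_one,
      C_apply, C_apply, monomial_mul, add_zero]
  have e4 : Wfn χ b σ (u + Finsupp.single i 1) •
        Finsupp.single (σ * degMon χ (u + Finsupp.single i 1)) (1 : MvPolynomial (Fin n) k)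
      = Finsupp.single (σ * degMon χ u * χ i)
          (monomial 0 (Wfn χ b σ u * b i (σ * degMon χ u))) := by
    rw [Wfn_add_single_right hb, hidx, ksmul_single, mul_one, C_apply]
  rw [smul_sub, e1, e2, e3] at h3
  rw [e4]
  rwa [sub_add_sub_cancel] at h3

lemma cong (hb : ∀ (i j : Fin n) (ρ : G →* kˣ),
      b j (ρ * χ i) * b i ρ = b i (ρ * χ j) * b j ρ)
    (u : Fin n →₀ ℕ) (σ : G →* kˣ) :
    Finsupp.single σ (monomial u 1)
      - Wfn χ b σ u • Finsupp.single (σ * degMon χ u) (1 : MvPolynomial (Fin n) k)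
      ∈ Mb χ b := by
  induction u using Finsupp.induction with
  | zero =>
      have h1 : σ * degMon χ (0 : Fin n →₀ ℕ) = σ := by
        rw [degMon_zero]
        exact mul_one σ
      rw [h1, Wfn_zero, one_smul, monomial_zero_one_eq_one, sub_self]
      exact Submodule.zero_mem _
  | single_add i m u' hiu' hm ih =>
      have main : ∀ m' : ℕ, Finsupp.single σ (monomial (u' + Finsupp.single i m') 1)
          - Wfn χ b σ (u' + Finsupp.single i m') •
            Finsupp.single (σ * degMon χ (u' + Finsupp.single i m'))
              (1 : MvPolynomial (Fin n) k) ∈ Mb χ b := by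
        intro m'
        induction m' with
        | zero => simpa using ih
        | succ m'' ih2 =>
            have h : u' + Finsupp.single i (m'' + 1)
                = (u' + Finsupp.single i m'') + Finsupp.single i 1 := by
              rw [add_assoc, ← Finsupp.single_add]
            rw [h]
            exact cong_step hb i ih2
      have h : Finsupp.single i m + u' = u' + Finsupp.single i m := add_comm _ _
      rw [h]
      exact main m

/-! ### The main theorem -/

/-- Let `b = (b_i^ρ)` satisfy the commutation relations
`b_j^{ρρ_i} b_i^ρ = b_i^{ρρ_j} b_j^ρ`.  Then the `G*`-graded Hilbert function
of `A/M_b` is identically one: `dim_k (A/M_b)_ρ = 1` for every `ρ ∈ G*`. -/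
theorem quotient_Mb_hilbert_function_one (χ : Fin n → G →* kˣ)
    (b : Fin n → (G →* kˣ) → k)
    (hb : ∀ (i j : Fin n) (ρ : G →* kˣ), b j (ρ * χ i) * b i ρ = b i (ρ * χ j) * b j ρ)
    (ρ : G →* kˣ) :
    Module.finrank k
      ((homPiece k χ ρ).map ((Mb χ b).mkQ.restrictScalars k)) = 1 := by
  set Qk := (Mb χ b).mkQ.restrictScalars k with hQk
  have hQ0 : ∀ x : Acar k G n, Qk x = 0 ↔ x ∈ Mb χ b := fun x =>
    Submodule.Quotient.mk_eq_zero _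
  -- the image of `e_ρ` is nonzero
  have hv : Qk (Finsupp.single ρ (1 : MvPolynomial (Fin n) k)) ≠ 0 := by
    intro h0
    have hmem : Finsupp.single ρ (1 : MvPolynomial (Fin n) k) ∈ Mb χ b := (hQ0 _).mp h0
    rw [← monomial_zero_one_eq_one] at hmem
    have h2 := phiF_Mb hb hmem
    rw [phiF_single, Wfn_zero, mul_one] at h2
    exact one_ne_zero h2
  -- the image submodule is the span of the image of `e_ρ`
  have himg : (homPiece k χ ρ).map Qk
      = Submodule.span k {Qk (Finsupp.single ρ (1 : MvPolynomial (Fin n) k))} := by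
    unfold homPiece
    rw [Submodule.map_span]
    apply le_antisymm
    · rw [Submodule.span_le]
      rintro _ ⟨f, ⟨u, σ, hdeg, rfl⟩, rfl⟩
      have hρ : σ * degMon χ u = ρ := (mul_comm σ (degMon χ u)).trans hdeg
      have hc := cong hb u σ
      have hz : Qk (Finsupp.single σ (monomial u 1)
          - Wfn χ b σ u • Finsupp.single (σ * degMon χ u) (1 : MvPolynomial (Fin n) k)) = 0 :=
        (hQ0 _).mpr hc
      rw [map_sub, sub_eq_zero] at hz
      rw [hz, map_smul, hρ]
      exact Submodule.smul_mem _ _ (Submodule.mem_span_singleton_self _)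
    · rw [Submodule.span_le, Set.singleton_subset_iff]
      refine Submodule.subset_span ⟨Finsupp.single ρ (1 : MvPolynomial (Fin n) k),
        ⟨0, ρ, ?_, ?_⟩, rfl⟩
      · rw [degMon_zero]
        exact one_mul ρ
      · rw [monomial_zero_one_eq_one]
  rw [himg]
  exact finrank_span_singleton hv

end
end

section
/- Let A/M be a cyclic A-module with dim_k(A/M)_ρ = 1 for all ρ ∈ G* and e_ρ ∉ M for all ρ. Then for each i and ρ there is a unique scalar b_i^ρ ∈ k with x_i e_ρ − b_i^ρ e_{ρρ_i} ∈ M, and these scalars satisfy the commutation relations b_i^{ρρ_j} b_j^ρ = b_j^{ρρ_i} b_i^ρ for all i, j, ρ. -/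
open MvPolynomial

section

variable {k : Type*} [Field k] {G : Type*} [CommGroup G] {n : ℕ}
variable [DecidableEq (G →* kˣ)]

/-- The homogeneous component of degree `τ` of a polynomial. -/
noncomputable def homComp (χ : Fin n → G →* kˣ) (τ : G →* kˣ)
    (p : MvPolynomial (Fin n) k) : MvPolynomial (Fin n) k :=
  ∑ u ∈ p.support.filter (fun u => degMon χ u = τ), monomial u (coeff u p)

/-- Left multiplication by the idempotent `e_σ ∈ A` on `A`. -/
noncomputable def eMul (χ : Fin n → G →* kˣ) (σ : G →* kˣ) (m : Acar k G n) :
    Acar k G n :=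
  ∑ ρ ∈ m.support, Finsupp.single ρ (homComp χ (σ * ρ⁻¹) (m ρ))

/-- A submodule of `A` is a left `A`-ideal iff it is an `S`-submodule stable
under left multiplication by all the idempotents `e_σ`. -/
def IsLeftIdeal (χ : Fin n → G →* kˣ)
    (N : Submodule (MvPolynomial (Fin n) k) (Acar k G n)) : Prop :=
  ∀ (σ : G →* kˣ), ∀ m ∈ N, eMul χ σ m ∈ N

private lemma singleC_mem (M : Submodule (MvPolynomial (Fin n) k) (Acar k G n))
    (he : ∀ ρ : G →* kˣ, Finsupp.single ρ (1 : MvPolynomial (Fin n) k) ∉ M)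
    {σ : G →* kˣ} {c : k} (h : Finsupp.single σ (C c : MvPolynomial (Fin n) k) ∈ M) :
    c = 0 := by
  by_contra hc
  have h2 := M.smul_mem (C c⁻¹ : MvPolynomial (Fin n) k) h
  rw [Finsupp.smul_single, smul_eq_mul, ← C_mul, inv_mul_cancel₀ hc, C_1] at h2
  exact he σ h2

private lemma exists_b (χ : Fin n → G →* kˣ)
    (M : Submodule (MvPolynomial (Fin n) k) (Acar k G n))
    (he : ∀ ρ : G →* kˣ, Finsupp.single ρ (1 : MvPolynomial (Fin n) k) ∉ M)
    (hdim : ∀ ρ : G →* kˣ,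
      Module.finrank k ((homPiece k χ ρ).map (M.mkQ.restrictScalars k)) = 1)
    (i : Fin n) (ρ : G →* kˣ) :
    ∃ c : k, Finsupp.single ρ (X i) - Finsupp.single (ρ * χ i) (C c) ∈ M := by
  have hmem1 : Finsupp.single ρ (X i : MvPolynomial (Fin n) k) ∈ homPiece k χ (ρ * χ i) := by
    apply Submodule.subset_span
    refine ⟨Finsupp.single i 1, ρ, ?_, rfl⟩
    show degMon χ (Finsupp.single i 1) * ρ = ρ * χ i
    have h1 : degMon χ (Finsupp.single i 1) = χ i := by
      rw [degMon, Finsupp.prod_single_index]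
      · exact pow_one (χ i)
      · exact pow_zero (χ i)
    rw [h1]
    exact MonoidHom.ext fun g => mul_comm _ _
  have hmem2 : Finsupp.single (ρ * χ i) (1 : MvPolynomial (Fin n) k) ∈
      homPiece k χ (ρ * χ i) := by
    apply Submodule.subset_span
    refine ⟨0, ρ * χ i, ?_, ?_⟩
    · show degMon χ 0 * (ρ * χ i) = ρ * χ i
      have h0 : degMon χ 0 = (1 : G →* kˣ) := Finsupp.prod_zero_index
      rw [h0]
      exact MonoidHom.ext fun g => one_mul _
    · rw [monomial_zero', C_1]
  set W := (homPiece k χ (ρ * χ i)).map (M.mkQ.restrictScalars k) with hW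
  set v : W := ⟨(M.mkQ.restrictScalars k) (Finsupp.single (ρ * χ i) 1),
    Submodule.mem_map_of_mem hmem2⟩ with hv
  have hvz : v ≠ 0 := by
    intro h
    apply he (ρ * χ i)
    have h' : (M.mkQ.restrictScalars k) (Finsupp.single (ρ * χ i)
        (1 : MvPolynomial (Fin n) k)) = 0 := congrArg Subtype.val h
    rw [LinearMap.restrictScalars_apply, Submodule.mkQ_apply,
      Submodule.Quotient.mk_eq_zero] at h'
    exact h'
  set w : W := ⟨(M.mkQ.restrictScalars k) (Finsupp.single ρ (X i)),
    Submodule.mem_map_of_mem hmem1⟩ with hw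
  obtain ⟨c, hc⟩ := (finrank_eq_one_iff_of_nonzero' v hvz).mp (hdim (ρ * χ i)) w
  refine ⟨c, ?_⟩
  have hc' : c • (M.mkQ.restrictScalars k) (Finsupp.single (ρ * χ i)
      (1 : MvPolynomial (Fin n) k)) = (M.mkQ.restrictScalars k) (Finsupp.single ρ (X i)) :=
    congrArg Subtype.val hc
  rw [← map_smul, LinearMap.restrictScalars_apply, LinearMap.restrictScalars_apply,
    Submodule.mkQ_apply, Submodule.mkQ_apply, Finsupp.smul_single, smul_eq_C_mul,
    mul_one, eq_comm, Submodule.Quotient.eq] at hc'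
  exact hc'

/-- Let `A/M` be a cyclic `A`-module with `dim_k (A/M)_ρ = 1` for all `ρ ∈ G*`
and `e_ρ ∉ M` for all `ρ`.  Then for each `i` and `ρ` there is a unique scalar
`b_i^ρ ∈ k` with `x_i e_ρ − b_i^ρ e_{ρρ_i} ∈ M`, and these scalars satisfy the
commutation relations `b_i^{ρρ_j} b_j^ρ = b_j^{ρρ_i} b_i^ρ`. -/
theorem exists_unique_b_of_cyclic (χ : Fin n → G →* kˣ)
    (M : Submodule (MvPolynomial (Fin n) k) (Acar k G n))
    (hM : IsLeftIdeal χ M)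
    (he : ∀ ρ : G →* kˣ, Finsupp.single ρ (1 : MvPolynomial (Fin n) k) ∉ M)
    (hdim : ∀ ρ : G →* kˣ,
      Module.finrank k ((homPiece k χ ρ).map (M.mkQ.restrictScalars k)) = 1) :
    ∃ b : Fin n → (G →* kˣ) → k,
      (∀ (i : Fin n) (ρ : G →* kˣ),
        Finsupp.single ρ (X i) - Finsupp.single (ρ * χ i) (C (b i ρ)) ∈ M) ∧
      (∀ (i : Fin n) (ρ : G →* kˣ) (c : k),
        Finsupp.single ρ (X i) - Finsupp.single (ρ * χ i) (C c) ∈ M → c = b i ρ) ∧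
      (∀ (i j : Fin n) (ρ : G →* kˣ),
        b i (ρ * χ j) * b j ρ = b j (ρ * χ i) * b i ρ) := by
  choose b hb using exists_b χ M he hdim
  -- uniqueness key: if y - single σ (C c) and y - single σ (C c') are in M then c = c'
  have key : ∀ (c c' : k) (σ : G →* kˣ) (y : Acar k G n),
      y - Finsupp.single σ (C c) ∈ M → y - Finsupp.single σ (C c') ∈ M → c = c' := by
    intro c c' σ y h h'
    have hs := M.sub_mem h h'
    have heq : (y - Finsupp.single σ (C c)) - (y - Finsupp.single σ (C c'))
        = Finsupp.single σ (C (c' - c)) := by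
      rw [C_sub, Finsupp.single_sub]
      abel
    rw [heq] at hs
    exact (sub_eq_zero.mp (singleC_mem M he hs)).symm
  -- the two-step relation
  have step : ∀ (i j : Fin n) (ρ : G →* kˣ),
      Finsupp.single ρ (X i * X j) -
        Finsupp.single (ρ * χ i * χ j) (C (b j (ρ * χ i) * b i ρ)) ∈ M := by
    intro i j ρ
    have h1 := M.smul_mem (X j : MvPolynomial (Fin n) k) (hb i ρ)
    have h2 := M.smul_mem (C (b i ρ) : MvPolynomial (Fin n) k) (hb j (ρ * χ i))
    rw [smul_sub, Finsupp.smul_single, Finsupp.smul_single, smul_eq_mul, smul_eq_mul] at h1 h2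
    have hsum := M.add_mem h1 h2
    have heq : (Finsupp.single ρ ((X j : MvPolynomial (Fin n) k) * X i)
          - Finsupp.single (ρ * χ i) ((X j : MvPolynomial (Fin n) k) * C (b i ρ)))
        + (Finsupp.single (ρ * χ i) (C (b i ρ) * X j)
          - Finsupp.single (ρ * χ i * χ j) (C (b i ρ) * C (b j (ρ * χ i))))
        = Finsupp.single ρ ((X i : MvPolynomial (Fin n) k) * X j)
          - Finsupp.single (ρ * χ i * χ j) (C (b j (ρ * χ i) * b i ρ)) := by
      rw [mul_comm (X j : MvPolynomial (Fin n) k) (C (b i ρ)), sub_add_sub_cancel,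
        mul_comm (X j : MvPolynomial (Fin n) k) (X i), ← C_mul,
        mul_comm (b i ρ) (b j (ρ * χ i))]
    rw [heq] at hsum
    exact hsum
  refine ⟨b, hb, ?_, ?_⟩
  · intro i ρ c h
    exact key c (b i ρ) (ρ * χ i) (Finsupp.single ρ (X i)) h (hb i ρ)
  · intro i j ρ
    have s1 := step i j ρ
    have s2 := step j i ρ
    rw [mul_comm (X j : MvPolynomial (Fin n) k) (X i), mul_right_comm ρ (χ j) (χ i)] at s2
    exact (key _ _ _ _ s2 s1)


end
end

section
/- Let J = in_w(I_M) be a monomial initial ideal of the lattice ideal I_M, and let A_J ⊆ M be the semigroup generated by {u − u' ∈ M : u, u' ∈ N^n, x^u ∈ J, x^{u'} ∉ J}. Then A_J is already generated by the smaller set {u − u' ∈ M : u, u' ∈ N^n, deg(u) = deg(u'), x^u is a minimal generator of J, x^{u'} ∉ J}. -/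
open MvPolynomial

section

variable {k : Type*} [Field k] {Γ : Type*} [CommGroup Γ] {n : ℕ}

/-- The `Γ`-degree of a monomial exponent vector: `deg(x^u) = ∏ χᵢ^{uᵢ}`. -/
def degM (χ : Fin n → Γ) (u : Fin n →₀ ℕ) : Γ := u.prod fun i e => χ i ^ e

/-- The lattice ideal `I_M = ⟨x^u − x^{u'} : u − u' ∈ M = ker(deg)⟩`. -/
noncomputable def latticeIdeal (k : Type*) [Field k] (χ : Fin n → Γ) : Ideal (MvPolynomial (Fin n) k) :=
  Ideal.span {f | ∃ u u' : Fin n →₀ ℕ, degM χ u = degM χ u' ∧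
    f = monomial u 1 - monomial u' 1}

/-- The `w`-weight of an exponent vector. -/
def wdeg (w : Fin n → ℚ) (u : Fin n →₀ ℕ) : ℚ := ∑ i ∈ u.support, w i * u i

/- The initial form of a polynomial: the sum of its terms of maximal `w`-weight. -/
open scoped Classical in
noncomputable def inW (w : Fin n → ℚ) (f : MvPolynomial (Fin n) k) :
    MvPolynomial (Fin n) k :=
  if h : f = 0 then 0 else
    ∑ u ∈ f.support.filter
        (fun u => wdeg w u = f.support.sup' (by simpa using h) (wdeg w)),
      monomial u (coeff u f)

/-- The initial ideal `in_w(I)`. -/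
noncomputable def initialIdeal (w : Fin n → ℚ) (I : Ideal (MvPolynomial (Fin n) k)) :
    Ideal (MvPolynomial (Fin n) k) :=
  Ideal.span {g | ∃ f ∈ I, g = inW w f}

/-- `J` is a monomial ideal. -/
def IsMonomialIdeal (J : Ideal (MvPolynomial (Fin n) k)) : Prop :=
  ∀ f ∈ J, ∀ u ∈ f.support, (monomial u 1 : MvPolynomial (Fin n) k) ∈ J

/-- `x^u` is a minimal generator of the monomial ideal `J`. -/
def IsMinimalGenerator (J : Ideal (MvPolynomial (Fin n) k)) (u : Fin n →₀ ℕ) : Prop :=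
  (monomial u 1 : MvPolynomial (Fin n) k) ∈ J ∧
    ∀ u' : Fin n →₀ ℕ, u' ≤ u → u' ≠ u → (monomial u' 1 : MvPolynomial (Fin n) k) ∉ J


open scoped Classical

lemma degM_add (χ : Fin n → Γ) (a b : Fin n →₀ ℕ) :
    degM χ (a + b) = degM χ a * degM χ b := by
  unfold degM
  exact Finsupp.prod_add_index' (fun i => pow_zero _) (fun i e e' => pow_add _ _ _)

lemma wdeg_eq_sum_univ (w : Fin n → ℚ) (u : Fin n →₀ ℕ) :
    wdeg w u = ∑ i : Fin n, w i * u i := by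
  unfold wdeg
  refine Finset.sum_subset (Finset.subset_univ _) ?_
  intro i _ hi
  rw [Finsupp.notMem_support_iff.mp hi]
  simp

lemma wdeg_add (w : Fin n → ℚ) (a b : Fin n →₀ ℕ) :
    wdeg w (a + b) = wdeg w a + wdeg w b := by
  simp only [wdeg_eq_sum_univ, ← Finset.sum_add_distrib]
  refine Finset.sum_congr rfl fun i _ => ?_
  rw [Finsupp.add_apply]
  push_cast
  ring

open scoped Classical in
noncomputable def proj (p : (Fin n →₀ ℕ) → Prop) (f : MvPolynomial (Fin n) k) :
    MvPolynomial (Fin n) k :=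
  ∑ z ∈ f.support.filter p, monomial z (coeff z f)

open scoped Classical in
lemma coeff_sum_filter (p : (Fin n →₀ ℕ) → Prop) [DecidablePred p]
    (f : MvPolynomial (Fin n) k) (z : Fin n →₀ ℕ) :
    coeff z (∑ u ∈ f.support.filter p, monomial u (coeff u f)) =
      if p z then coeff z f else 0 := by
  rw [coeff_sum]
  have : ∀ u ∈ f.support.filter p, coeff z (monomial u (coeff u f)) =
      if u = z then coeff u f else 0 := fun u _ => coeff_monomial _ _ _
  rw [Finset.sum_congr rfl this, Finset.sum_ite_eq']
  by_cases hz : p z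
  · by_cases hc : coeff z f = 0
    · simp [hz, hc]
    · simp [hz, Finset.mem_filter, MvPolynomial.mem_support_iff.mpr hc]
  · simp [hz, Finset.mem_filter]

open scoped Classical in
lemma coeff_proj (p : (Fin n →₀ ℕ) → Prop) (f : MvPolynomial (Fin n) k) (z : Fin n →₀ ℕ) :
    coeff z (proj p f) = if p z then coeff z f else 0 := by
  unfold proj
  rw [coeff_sum_filter]


open scoped Classical in
lemma proj_congr {p q : (Fin n →₀ ℕ) → Prop} (h : ∀ z, p z ↔ q z)
    (f : MvPolynomial (Fin n) k) : proj p f = proj q f := by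
  ext z; rw [coeff_proj, coeff_proj]
  simp [h z]

lemma proj_zero (p : (Fin n →₀ ℕ) → Prop) : proj p (0 : MvPolynomial (Fin n) k) = 0 := by
  ext z; rw [coeff_proj]
  simp

open scoped Classical in
lemma proj_add (p : (Fin n →₀ ℕ) → Prop) (f g : MvPolynomial (Fin n) k) :
    proj p (f + g) = proj p f + proj p g := by
  ext z; simp only [coeff_add, coeff_proj]
  split <;> simp

open scoped Classical in
lemma proj_sub (p : (Fin n →₀ ℕ) → Prop) (f g : MvPolynomial (Fin n) k) :
    proj p (f - g) = proj p f - proj p g := by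
  ext z; simp only [coeff_sub, coeff_proj]
  split <;> simp

open scoped Classical in
lemma proj_sum {X : Type*} (p : (Fin n →₀ ℕ) → Prop) (s : Finset X)
    (g : X → MvPolynomial (Fin n) k) :
    proj p (∑ x ∈ s, g x) = ∑ x ∈ s, proj p (g x) := by
  ext z; simp only [coeff_proj, coeff_sum]
  split <;> simp

open scoped Classical in
lemma proj_monomial (p : (Fin n →₀ ℕ) → Prop) (u : Fin n →₀ ℕ) (a : k) :
    proj p (monomial u a) = if p u then monomial u a else 0 := by
  ext z; rw [coeff_proj]
  by_cases hz : u = z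
  · subst hz; by_cases hp : p u <;> simp [hp, coeff_monomial]
  · by_cases hp : p u <;> simp [hp, coeff_monomial, hz]

open scoped Classical in
lemma proj_proj (p q : (Fin n →₀ ℕ) → Prop) (f : MvPolynomial (Fin n) k) :
    proj p (proj q f) = proj (fun z => p z ∧ q z) f := by
  ext z; simp only [coeff_proj]
  by_cases hp : p z <;> by_cases hq : q z <;> simp [hp, hq]

open scoped Classical in
lemma proj_monomial_mul (p : (Fin n →₀ ℕ) → Prop) (c : Fin n →₀ ℕ) (a : k)
    (f : MvPolynomial (Fin n) k) :
    proj p (monomial c a * f) = monomial c a * proj (fun y => p (c + y)) f := by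
  ext z
  rw [coeff_proj, coeff_monomial_mul', coeff_monomial_mul']
  by_cases hc : c ≤ z
  · have hz : c + (z - c) = z := add_tsub_cancel_of_le hc
    rw [if_pos hc, if_pos hc, coeff_proj, hz]
    by_cases hp : p z <;> simp [hp]
  · rw [if_neg hc, if_neg hc]
    simp

open scoped Classical in
lemma support_proj (p : (Fin n →₀ ℕ) → Prop) (f : MvPolynomial (Fin n) k) (z : Fin n →₀ ℕ) :
    z ∈ (proj p f).support ↔ p z ∧ z ∈ f.support := by
  rw [MvPolynomial.mem_support_iff, coeff_proj]
  by_cases hp : p z <;> simp [hp, MvPolynomial.mem_support_iff]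

open scoped Classical in
lemma inW_eq_proj (w : Fin n → ℚ) {f : MvPolynomial (Fin n) k} (h : f ≠ 0) :
    inW w f = proj (fun z => wdeg w z =
      f.support.sup' (by simpa using h) (wdeg w)) f := by
  ext z
  rw [inW, dif_neg h, coeff_sum_filter, coeff_proj]
  split <;> rfl


lemma inW_zero (w : Fin n → ℚ) : inW w (0 : MvPolynomial (Fin n) k) = 0 := by
  rw [inW]; simp

lemma eval_ones_eq_zero (χ : Fin n → Γ) {f : MvPolynomial (Fin n) k}
    (hf : f ∈ latticeIdeal k χ) : eval (fun _ => (1 : k)) f = 0 := by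
  refine Submodule.span_induction ?_ ?_ ?_ ?_ hf
  · rintro g ⟨u, u', -, rfl⟩
    simp [eval_monomial, Finsupp.prod]
  · simp
  · intro x y _ _ hx hy; rw [map_add, hx, hy, add_zero]
  · intro a x _ hx; rw [smul_eq_mul, map_mul, hx, mul_zero]

lemma projDeg_mem (χ : Fin n → Γ) {f : MvPolynomial (Fin n) k}
    (hf : f ∈ latticeIdeal k χ) :
    ∀ δ : Γ, proj (fun z => degM χ z = δ) f ∈ latticeIdeal k χ := by
  refine Submodule.span_induction ?_ ?_ ?_ ?_ hf
  · rintro x ⟨u, u', hdeg, rfl⟩ δ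
    rw [proj_sub, proj_monomial, proj_monomial]
    by_cases h : degM χ u = δ
    · rw [if_pos h, if_pos (hdeg ▸ h)]
      exact Ideal.subset_span ⟨u, u', hdeg, rfl⟩
    · rw [if_neg h, if_neg (fun hh => h (hdeg.trans hh))]
      simp only [sub_zero, sub_self]
      exact zero_mem _
  · intro δ; rw [proj_zero]; exact zero_mem _
  · intro x y _ _ ihx ihy δ; rw [proj_add]; exact add_mem (ihx δ) (ihy δ)
  · intro a x _ ih δ
    rw [smul_eq_mul]
    nth_rewrite 1 [as_sum a]
    rw [Finset.sum_mul, proj_sum]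
    refine Submodule.sum_mem _ fun c _ => ?_
    rw [proj_monomial_mul]
    have hcong : proj (fun y => degM χ (c + y) = δ) x
        = proj (fun y => degM χ y = (degM χ c)⁻¹ * δ) x :=
      proj_congr (fun z => by rw [degM_add]; exact eq_inv_mul_iff_mul_eq.symm) x
    rw [hcong]
    exact Ideal.mul_mem_left _ _ (ih _)

lemma keyJ (χ : Fin n → Γ) (w : Fin n → ℚ) {h : MvPolynomial (Fin n) k}
    (hh : h ∈ initialIdeal w (latticeIdeal k χ)) :
    ∀ (δ : Γ) (e : ℚ), (∀ z : Fin n →₀ ℕ, degM χ z = δ → e ≤ wdeg w z) →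
      proj (fun z => degM χ z = δ ∧ wdeg w z = e) h ∈ latticeIdeal k χ := by
  refine Submodule.span_induction ?_ ?_ ?_ ?_ hh
  · rintro g ⟨f, hf, rfl⟩ δ e hQ
    by_cases hf0 : f = 0
    · subst hf0; rw [inW_zero, proj_zero]; exact zero_mem _
    · rw [inW_eq_proj w hf0, proj_proj]
      by_cases hes : e = f.support.sup' (by simpa using hf0) (wdeg w)
      · have : proj (fun z => (degM χ z = δ ∧ wdeg w z = e) ∧
            wdeg w z = f.support.sup' (by simpa using hf0) (wdeg w)) f
            = proj (fun z => degM χ z = δ) f := by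
          ext z
          rw [coeff_proj, coeff_proj]
          by_cases hzf : coeff z f = 0
          · split <;> split <;> simp [hzf]
          · have hzs : z ∈ f.support := mem_support_iff.mpr hzf
            have hle : wdeg w z ≤ e := by
              rw [hes]; exact Finset.le_sup' (wdeg w) hzs
            by_cases hd : degM χ z = δ
            · have hze : wdeg w z = e := le_antisymm hle (hQ z hd)
              simp [hd, hze, ← hes]
            · simp [hd]
        rw [this]
        exact projDeg_mem χ hf δ
      · have : proj (fun z => (degM χ z = δ ∧ wdeg w z = e) ∧
            wdeg w z = f.support.sup' (by simpa using hf0) (wdeg w)) f = 0 := by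
          ext z
          rw [coeff_proj, if_neg, coeff_zero]
          rintro ⟨⟨-, h1⟩, h2⟩
          exact hes (h1 ▸ h2)
        rw [this]; exact zero_mem _
  · intro δ e _; rw [proj_zero]; exact zero_mem _
  · intro x y _ _ ihx ihy δ e hQ; rw [proj_add]; exact add_mem (ihx δ e hQ) (ihy δ e hQ)
  · intro a x _ ih δ e hQ
    rw [smul_eq_mul]
    nth_rewrite 1 [as_sum a]
    rw [Finset.sum_mul, proj_sum]
    refine Submodule.sum_mem _ fun c _ => ?_
    rw [proj_monomial_mul]
    have hcong : proj (fun y => degM χ (c + y) = δ ∧ wdeg w (c + y) = e) x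
        = proj (fun y => degM χ y = (degM χ c)⁻¹ * δ ∧ wdeg w y = e - wdeg w c) x := by
      refine proj_congr (fun z => ?_) x
      rw [degM_add, wdeg_add]
      constructor
      · rintro ⟨h1, h2⟩; exact ⟨eq_inv_mul_iff_mul_eq.mpr h1, by linarith⟩
      · rintro ⟨h1, h2⟩; exact ⟨eq_inv_mul_iff_mul_eq.mp h1, by linarith⟩
    rw [hcong]
    refine Ideal.mul_mem_left _ _ (ih ((degM χ c)⁻¹ * δ) (e - wdeg w c) ?_)
    intro z hz
    have := hQ (c + z) (by rw [degM_add, hz, mul_inv_cancel_left])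
    rw [wdeg_add] at this
    linarith

noncomputable def Dw (w : Fin n → ℚ) : ℕ := ∏ i, (w i).den

lemma Dw_pos (w : Fin n → ℚ) : 0 < Dw w :=
  Finset.prod_pos fun i _ => (w i).pos

noncomputable def muW (w : Fin n → ℚ) (u : Fin n →₀ ℕ) : ℕ :=
  ∑ i, ((w i).num.toNat * (Dw w / (w i).den)) * u i

lemma coef_cast (w : Fin n → ℚ) (hw : ∀ i, 0 ≤ w i) (i : Fin n) :
    (((w i).num.toNat * (Dw w / (w i).den) : ℕ) : ℚ) = w i * Dw w := by
  have hdvd : (w i).den ∣ Dw w := Finset.dvd_prod_of_mem _ (Finset.mem_univ i)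
  have h1 : ((w i).den : ℕ) * (Dw w / (w i).den) = Dw w := Nat.mul_div_cancel' hdvd
  have h2 : ((w i).num.toNat : ℚ) = ((w i).num : ℚ) := by
    exact_mod_cast congrArg (fun z : ℤ => (z : ℚ))
      (Int.toNat_of_nonneg (Rat.num_nonneg.mpr (hw i)))
  push_cast [h2]
  rw [show (w i * Dw w : ℚ) = w i * ((w i).den * (Dw w / (w i).den : ℕ)) by
    rw_mod_cast [h1], ← mul_assoc, Rat.mul_den_eq_num]

lemma muW_cast (w : Fin n → ℚ) (hw : ∀ i, 0 ≤ w i) (u : Fin n →₀ ℕ) :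
    ((muW w u : ℕ) : ℚ) = wdeg w u * Dw w := by
  rw [wdeg_eq_sum_univ, Finset.sum_mul, muW]
  push_cast
  refine Finset.sum_congr rfl fun i _ => ?_
  rw [show (((w i).num.toNat : ℚ) * ((Dw w / (w i).den : ℕ) : ℚ)) * (u i : ℚ)
      = (((w i).num.toNat * (Dw w / (w i).den) : ℕ) : ℚ) * u i by push_cast; ring,
    coef_cast w hw i]
  ring

lemma muW_lt (w : Fin n → ℚ) (hw : ∀ i, 0 ≤ w i) {a b : Fin n →₀ ℕ}
    (h : wdeg w a < wdeg w b) : muW w a < muW w b := by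
  have : ((muW w a : ℕ) : ℚ) < ((muW w b : ℕ) : ℚ) := by
    rw [muW_cast w hw, muW_cast w hw]
    have : (0 : ℚ) < Dw w := by exact_mod_cast Dw_pos w
    exact mul_lt_mul_of_pos_right h this
  exact_mod_cast this

lemma muW_le (w : Fin n → ℚ) (hw : ∀ i, 0 ≤ w i) {a b : Fin n →₀ ℕ}
    (h : muW w a ≤ muW w b) : wdeg w a ≤ wdeg w b := by
  by_contra hlt
  exact absurd (muW_lt w hw (lt_of_not_ge hlt)) (not_lt.mpr h)

variable {χ : Fin n → Γ} {w : Fin n → ℚ} {J : Ideal (MvPolynomial (Fin n) k)}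

/-- Weight comparison: a `J`-monomial weighs strictly more than the standard monomial
of the same degree. -/
lemma wdeg_std_lt (hJ : J = initialIdeal w (latticeIdeal k χ))
    (hmono : IsMonomialIdeal J) {u u' : Fin n →₀ ℕ}
    (hdeg : degM χ u = degM χ u')
    (hu : (monomial u 1 : MvPolynomial (Fin n) k) ∈ J)
    (hu' : (monomial u' 1 : MvPolynomial (Fin n) k) ∉ J) :
    wdeg w u' < wdeg w u := by
  have hne : u ≠ u' := by rintro rfl; exact hu' hu
  set f : MvPolynomial (Fin n) k := monomial u 1 - monomial u' 1 with hf
  have hfI : f ∈ latticeIdeal k χ := Ideal.subset_span ⟨u, u', hdeg, rfl⟩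
  have hcu : coeff u f = 1 := by
    rw [hf, coeff_sub, coeff_monomial, coeff_monomial, if_pos rfl,
      if_neg (fun h => hne h.symm), sub_zero]
  have hcu' : coeff u' f = -1 := by
    rw [hf, coeff_sub, coeff_monomial, coeff_monomial, if_pos rfl, if_neg hne, zero_sub]
  have hf0 : f ≠ 0 := fun h0 => by
    rw [h0, coeff_zero] at hcu; exact one_ne_zero hcu.symm
  have hsupp : ∀ z ∈ f.support, z = u ∨ z = u' := by
    intro z hz
    by_contra hcon
    push_neg at hcon
    have : coeff z f = 0 := by
      rw [hf, coeff_sub, coeff_monomial, coeff_monomial,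
        if_neg (fun h => hcon.1 h.symm), if_neg (fun h => hcon.2 h.symm), sub_zero]
    exact MvPolynomial.mem_support_iff.mp hz this
  have hinJ : inW w f ∈ J := by
    rw [hJ]; exact Ideal.subset_span ⟨f, hfI, rfl⟩
  by_contra hle
  push_neg at hle
  have hu'supp : u' ∈ f.support := MvPolynomial.mem_support_iff.mpr (by rw [hcu']; simp)
  have hsup : f.support.sup' (by simpa using hf0) (wdeg w) = wdeg w u' := by
    refine le_antisymm (Finset.sup'_le _ _ fun z hz => ?_) (Finset.le_sup' _ hu'supp)
    rcases hsupp z hz with rfl | rfl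
    · exact hle
    · exact le_refl _
  have : u' ∈ (inW w f).support := by
    rw [inW_eq_proj w hf0, support_proj]
    exact ⟨hsup.symm ▸ rfl, hu'supp⟩
  exact hu' (hmono _ hinJ u' this)

/-- Uniqueness of the standard monomial in each degree. -/
lemma std_unique (hJ : J = initialIdeal w (latticeIdeal k χ))
    (hmono : IsMonomialIdeal J) {u u' : Fin n →₀ ℕ}
    (hdeg : degM χ u = degM χ u')
    (hu : (monomial u 1 : MvPolynomial (Fin n) k) ∉ J)
    (hu' : (monomial u' 1 : MvPolynomial (Fin n) k) ∉ J) : u = u' := by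
  by_contra hne
  set f : MvPolynomial (Fin n) k := monomial u 1 - monomial u' 1 with hf
  have hfI : f ∈ latticeIdeal k χ := Ideal.subset_span ⟨u, u', hdeg, rfl⟩
  have hcu : coeff u f = 1 := by
    rw [hf, coeff_sub, coeff_monomial, coeff_monomial, if_pos rfl,
      if_neg (fun h => hne h.symm), sub_zero]
  have hf0 : f ≠ 0 := fun h0 => by
    rw [h0, coeff_zero] at hcu; exact one_ne_zero hcu.symm
  have hsupp : ∀ z ∈ f.support, z = u ∨ z = u' := by
    intro z hz
    by_contra hcon
    push_neg at hcon
    have : coeff z f = 0 := by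
      rw [hf, coeff_sub, coeff_monomial, coeff_monomial,
        if_neg (fun h => hcon.1 h.symm), if_neg (fun h => hcon.2 h.symm), sub_zero]
    exact MvPolynomial.mem_support_iff.mp hz this
  have hinJ : inW w f ∈ J := by
    rw [hJ]; exact Ideal.subset_span ⟨f, hfI, rfl⟩
  obtain ⟨b, hb, hbsup⟩ :=
    Finset.exists_mem_eq_sup' (by simpa using hf0 : f.support.Nonempty) (wdeg w)
  have hbin : b ∈ (inW w f).support := by
    rw [inW_eq_proj w hf0, support_proj]
    exact ⟨hbsup.symm, hb⟩
  have := hmono _ hinJ b hbin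
  rcases hsupp b hb with rfl | rfl
  · exact hu this
  · exact hu' this

/-- Existence of the standard monomial in each degree, of minimal weight. -/
lemma exists_std (hgen : ∀ γ : Γ, ∃ u : Fin n →₀ ℕ, degM χ u = γ)
    (hw : ∀ i, 0 ≤ w i)
    (hJ : J = initialIdeal w (latticeIdeal k χ)) (γ : Γ) :
    ∃ u₀ : Fin n →₀ ℕ, degM χ u₀ = γ ∧
      (monomial u₀ 1 : MvPolynomial (Fin n) k) ∉ J ∧
      ∀ z : Fin n →₀ ℕ, degM χ z = γ → wdeg w u₀ ≤ wdeg w z := by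
  classical
  set T : Set ℕ := {N | ∃ u : Fin n →₀ ℕ, degM χ u = γ ∧ muW w u = N} with hT
  obtain ⟨ug, hug⟩ := hgen γ
  have hTne : T.Nonempty := ⟨muW w ug, ug, hug, rfl⟩
  obtain ⟨u₀, hu₀deg, hu₀N⟩ := Nat.sInf_mem hTne
  have hmin : ∀ z : Fin n →₀ ℕ, degM χ z = γ → wdeg w u₀ ≤ wdeg w z := by
    intro z hz
    refine muW_le w hw ?_
    rw [hu₀N]
    exact Nat.sInf_le ⟨z, hz, rfl⟩
  refine ⟨u₀, hu₀deg, ?_, hmin⟩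
  intro hmem
  have hQ : ∀ z : Fin n →₀ ℕ, degM χ z = γ → wdeg w u₀ ≤ wdeg w z := hmin
  rw [hJ] at hmem
  have := keyJ χ w hmem γ (wdeg w u₀) hQ
  rw [proj_monomial, if_pos ⟨hu₀deg, rfl⟩] at this
  have := eval_ones_eq_zero χ this
  rw [eval_monomial] at this
  simp [Finsupp.prod] at this

/-- Every `J`-monomial is divisible by a minimal generator. -/
lemma exists_minGen {u : Fin n →₀ ℕ}
    (hu : (monomial u 1 : MvPolynomial (Fin n) k) ∈ J) :
    ∃ v : Fin n →₀ ℕ, v ≤ u ∧ IsMinimalGenerator J v := by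
  classical
  set T : Set ℕ := {N | ∃ v : Fin n →₀ ℕ, v ≤ u ∧
    (monomial v 1 : MvPolynomial (Fin n) k) ∈ J ∧ (∑ i, v i) = N} with hT
  have hTne : T.Nonempty := ⟨∑ i, u i, u, le_refl u, hu, rfl⟩
  obtain ⟨v, hvu, hvJ, hvN⟩ := Nat.sInf_mem hTne
  refine ⟨v, hvu, hvJ, ?_⟩
  intro v'' hle hne hmem
  have hlt : (∑ i, v'' i) < ∑ i, v i := by
    refine Finset.sum_lt_sum (fun i _ => Finsupp.le_def.mp hle i) ?_
    by_contra hcon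
    push_neg at hcon
    refine hne (Finsupp.ext fun i => ?_)
    exact le_antisymm (Finsupp.le_def.mp hle i) (hcon i (Finset.mem_univ i))
  have := Nat.sInf_le (show (∑ i, v'' i) ∈ T from ⟨v'', hle.trans hvu, hmem, rfl⟩)
  omega

/-- Main reduction: the difference of a `J`-monomial and the standard monomial of the
same degree lies in the submonoid generated by minimal-generator differences. -/
lemma main_reduction (hgen : ∀ γ : Γ, ∃ u : Fin n →₀ ℕ, degM χ u = γ)
    (hw : ∀ i, 0 ≤ w i)
    (hJ : J = initialIdeal w (latticeIdeal k χ)) (hmono : IsMonomialIdeal J) :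
    ∀ (N : ℕ) (u u' : Fin n →₀ ℕ), muW w u = N → degM χ u = degM χ u' →
      (monomial u 1 : MvPolynomial (Fin n) k) ∈ J →
      (monomial u' 1 : MvPolynomial (Fin n) k) ∉ J →
      (fun i => (u i : ℤ) - (u' i : ℤ)) ∈ AddSubmonoid.closure
        {d : Fin n → ℤ | ∃ u u' : Fin n →₀ ℕ, degM χ u = degM χ u' ∧
          IsMinimalGenerator J u ∧
          (monomial u' 1 : MvPolynomial (Fin n) k) ∉ J ∧
          d = fun i => (u i : ℤ) - (u' i : ℤ)} := by
  intro N
  induction N using Nat.strong_induction_on with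
  | _ N ih =>
    intro u u' hN hdeg hu hu'
    obtain ⟨v, hvu, hvmin⟩ := exists_minGen hu
    obtain ⟨v', hv'deg, hv'J, hv'min⟩ := exists_std hgen hw hJ (degM χ v)
    have hvv' : wdeg w v' < wdeg w v :=
      wdeg_std_lt hJ hmono hv'deg.symm hvmin.1 hv'J
    have htv : (u - v) + v = u := tsub_add_cancel_of_le hvu
    set t : Fin n →₀ ℕ := u - v with ht
    set u₂ : Fin n →₀ ℕ := t + v' with hu₂
    have hdeg₂ : degM χ u₂ = degM χ u' := by
      rw [← hdeg, ← htv, hu₂, degM_add, degM_add, hv'deg]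
    have hti : ∀ i, t i + v i = u i := fun i => by
      rw [← htv]; simp [Finsupp.add_apply]
    have h2i : ∀ i, u₂ i = t i + v' i := fun i => by
      rw [hu₂]; simp [Finsupp.add_apply]
    by_cases h2J : (monomial u₂ 1 : MvPolynomial (Fin n) k) ∈ J
    · have hw2 : wdeg w u₂ < wdeg w u := by
        rw [← htv, hu₂, wdeg_add, wdeg_add]
        linarith
      have hμ : muW w u₂ < N := hN ▸ muW_lt w hw hw2
      have hrec := ih (muW w u₂) hμ u₂ u' rfl hdeg₂ h2J hu'
      have harith : (fun i => (u i : ℤ) - (u' i : ℤ))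
          = (fun i => (v i : ℤ) - (v' i : ℤ)) + (fun i => (u₂ i : ℤ) - (u' i : ℤ)) := by
        funext i
        have h1 := hti i
        have h2 := h2i i
        simp only [Pi.add_apply]
        have : (u i : ℤ) = t i + v i := by exact_mod_cast h1.symm
        rw [this]
        have : (u₂ i : ℤ) = t i + v' i := by exact_mod_cast h2
        rw [this]
        ring
      rw [harith]
      exact AddSubmonoid.add_mem _
        (AddSubmonoid.subset_closure ⟨v, v', hv'deg.symm, hvmin, hv'J, rfl⟩) hrec
    · have heq : u₂ = u' := std_unique hJ hmono hdeg₂ h2J hu'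
      have harith : (fun i => (u i : ℤ) - (u' i : ℤ))
          = fun i => (v i : ℤ) - (v' i : ℤ) := by
        funext i
        have h1 := hti i
        have h2 := h2i i
        rw [← heq]
        have hui : (u i : ℤ) = t i + v i := by exact_mod_cast h1.symm
        have hu2i : (u₂ i : ℤ) = t i + v' i := by exact_mod_cast h2
        rw [hui, hu2i]
        ring
      rw [harith]
      exact AddSubmonoid.subset_closure ⟨v, v', hv'deg.symm, hvmin, hv'J, rfl⟩


/-- Let `J = in_w(I_M)` be a monomial initial ideal of the lattice ideal `I_M`.
The semigroup `A_J` generated by `{u − u' ∈ M : x^u ∈ J, x^{u'} ∉ J}` is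
already generated by the differences `u − u'` in which `x^u` is a minimal
generator of `J`. -/
theorem semigroup_AJ_generated_by_minimal_generators (χ : Fin n → Γ)
    (hgen : ∀ γ : Γ, ∃ u : Fin n →₀ ℕ, degM χ u = γ)
    (w : Fin n → ℚ) (hw : ∀ i, 0 ≤ w i)
    (J : Ideal (MvPolynomial (Fin n) k)) (hJ : J = initialIdeal w (latticeIdeal k χ))
    (hmono : IsMonomialIdeal J) :
    AddSubmonoid.closure
      {d : Fin n → ℤ | ∃ u u' : Fin n →₀ ℕ, degM χ u = degM χ u' ∧
        (monomial u 1 : MvPolynomial (Fin n) k) ∈ J ∧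
        (monomial u' 1 : MvPolynomial (Fin n) k) ∉ J ∧
        d = fun i => (u i : ℤ) - (u' i : ℤ)} =
    AddSubmonoid.closure
      {d : Fin n → ℤ | ∃ u u' : Fin n →₀ ℕ, degM χ u = degM χ u' ∧
        IsMinimalGenerator J u ∧
        (monomial u' 1 : MvPolynomial (Fin n) k) ∉ J ∧
        d = fun i => (u i : ℤ) - (u' i : ℤ)} := by
  apply le_antisymm
  · rw [AddSubmonoid.closure_le]
    rintro d ⟨u, u', hdeg, hu, hu', rfl⟩
    exact main_reduction hgen hw hJ hmono (muW w u) u u' rfl hdeg hu hu'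
  · exact AddSubmonoid.closure_mono
      (fun d => by rintro ⟨u, u', hdeg, hmin, hu', rfl⟩
                   exact ⟨u, u', hdeg, hmin.1, hu', rfl⟩)

end
end

section
/- Let I_M ⊆ k[x_1,...,x_n] be the lattice ideal of a sublattice M ⊆ Z^n, and let L ⊆ M be a generating set for the lattice M. Then I_M equals the saturation (⟨x^{pos(u)} − x^{neg(u)} : u ∈ L⟩ : (x_1⋯x_n)^∞). -/
open MvPolynomial

section

variable {k : Type*} [Field k] {n : ℕ}

/-- The monomial `x^{pos(u)}` associated to the positive part of `u : ℤⁿ`. -/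
noncomputable def monPos (k : Type*) [Field k] (u : Fin n → ℤ) : MvPolynomial (Fin n) k :=
  ∏ i : Fin n, X i ^ (u i).toNat

/-- The monomial `x^{neg(u)}` associated to the negative part of `u : ℤⁿ`. -/
noncomputable def monNeg (k : Type*) [Field k] (u : Fin n → ℤ) : MvPolynomial (Fin n) k :=
  ∏ i : Fin n, X i ^ (-u i).toNat

/-- The lattice ideal `I_M = ⟨x^a − x^b : a, b ∈ ℕⁿ, a − b ∈ M⟩` of a sublattice
`M ⊆ ℤⁿ`. -/
noncomputable def latticeIdealOf (k : Type*) [Field k] (M : AddSubgroup (Fin n → ℤ)) :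
    Ideal (MvPolynomial (Fin n) k) :=
  Ideal.span {f | ∃ a b : Fin n → ℕ, (fun i => (a i : ℤ) - (b i : ℤ)) ∈ M ∧
    f = (∏ i : Fin n, X i ^ a i) - ∏ i : Fin n, X i ^ b i}

def castHom (n : ℕ) : (Fin n →₀ ℕ) →+ (Fin n → ℤ) where
  toFun d := fun i => (d i : ℤ)
  map_zero' := by ext i; simp
  map_add' d e := by ext i; simp

noncomputable def expHom (M : AddSubgroup (Fin n → ℤ)) : (Fin n →₀ ℕ) →+ (Fin n → ℤ) ⧸ M :=
  (QuotientAddGroup.mk' M).comp (castHom n)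

noncomputable def phi (k : Type*) [Field k] {n : ℕ} (M : AddSubgroup (Fin n → ℤ)) :
    MvPolynomial (Fin n) k →+* AddMonoidAlgebra k ((Fin n → ℤ) ⧸ M) :=
  AddMonoidAlgebra.mapDomainRingHom k (expHom M)

lemma phi_monomial (M : AddSubgroup (Fin n → ℤ)) (d : Fin n →₀ ℕ) (c : k) :
    phi k M (monomial d c) = AddMonoidAlgebra.single (expHom M d) c := by
  rw [← single_eq_monomial]
  simp [phi, AddMonoidAlgebra.mapDomainRingHom, Finsupp.mapDomain_single]

lemma prod_X_pow' (a : Fin n → ℕ) :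
    (∏ i : Fin n, (X i : MvPolynomial (Fin n) k) ^ a i)
      = monomial (Finsupp.equivFunOnFinite.symm a) 1 := by
  rw [monomial_eq]; simp [Finsupp.prod_fintype]

lemma monomial_one_eq (d : Fin n →₀ ℕ) :
    (monomial d (1:k)) = ∏ i : Fin n, X i ^ d i := by
  rw [prod_X_pow', Finsupp.equivFunOnFinite_symm_coe d]

lemma expHom_symm (M : AddSubgroup (Fin n → ℤ)) (a : Fin n → ℕ) :
    expHom M (Finsupp.equivFunOnFinite.symm a)
      = QuotientAddGroup.mk' M (fun i => (a i : ℤ)) := by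
  simp [expHom, castHom]

lemma expHom_eq_iff (M : AddSubgroup (Fin n → ℤ)) (d e : Fin n →₀ ℕ) :
    expHom M d = expHom M e ↔ (fun i => (d i : ℤ) - (e i : ℤ)) ∈ M := by
  simp only [expHom, AddMonoidHom.comp_apply, QuotientAddGroup.mk'_apply,
    QuotientAddGroup.eq_iff_sub_mem, castHom, AddMonoidHom.coe_mk, ZeroHom.coe_mk]
  constructor <;> · intro h; convert h using 1; rfl

lemma phi_prodpow (M : AddSubgroup (Fin n → ℤ)) (a : Fin n → ℕ) :
    phi k M (∏ i : Fin n, X i ^ a i)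
      = AddMonoidAlgebra.single (QuotientAddGroup.mk' M (fun i => (a i : ℤ))) (1 : k) := by
  rw [prod_X_pow', phi_monomial, expHom_symm]

lemma mapDomain_apply_eq {α β : Type*} [DecidableEq β] (f : α → β) (g : α →₀ k) (w : β) :
    Finsupp.mapDomain f g w = ∑ d ∈ g.support, if f d = w then g d else 0 := by
  rw [Finsupp.mapDomain, Finsupp.sum_apply]
  exact Finset.sum_congr rfl fun d _ => Finsupp.single_apply

lemma binom_mem (M : AddSubgroup (Fin n → ℤ)) (d e : Fin n →₀ ℕ)
    (h : expHom M d = expHom M e) :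
    (monomial d (1:k)) - monomial e 1 ∈ latticeIdealOf k M := by
  rw [monomial_one_eq, monomial_one_eq]
  exact Ideal.subset_span ⟨_, _, (expHom_eq_iff M d e).mp h, rfl⟩

lemma prodpow_mul (e f : Fin n → ℕ) :
    (∏ i : Fin n, (X i : MvPolynomial (Fin n) k) ^ e i) * ∏ i : Fin n, X i ^ f i
      = ∏ i : Fin n, X i ^ (e i + f i) := by
  rw [← Finset.prod_mul_distrib]
  exact Finset.prod_congr rfl fun i _ => (pow_add _ _ _).symm


lemma phi_apply_eq (M : AddSubgroup (Fin n → ℤ)) (g : MvPolynomial (Fin n) k) :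
    (phi k M g).coeff = Finsupp.mapDomain (expHom M) (AddMonoidAlgebra.coeff g) := rfl

lemma mem_of_ker (M : AddSubgroup (Fin n → ℤ)) :
    ∀ (N : ℕ) (g : MvPolynomial (Fin n) k), g.support.card ≤ N →
      phi k M g = 0 → g ∈ latticeIdealOf k M := by
  intro N
  induction N with
  | zero =>
    intro g hc _
    have h0 : g = 0 := support_eq_empty.mp (Finset.card_eq_zero.mp (Nat.le_zero.mp hc))
    rw [h0]; exact zero_mem _
  | succ N ih =>
    intro g hc hker
    classical
    by_cases hg0 : g = 0
    · rw [hg0]; exact zero_mem _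
    obtain ⟨d₀, hd₀⟩ := Finset.nonempty_iff_ne_empty.mpr
      (fun h => hg0 (support_eq_empty.mp h))
    set F := g.support.filter (fun d => expHom M d = expHom M d₀) with hF
    have hd₀F : d₀ ∈ F := Finset.mem_filter.mpr ⟨hd₀, rfl⟩
    have hsum : ∑ d ∈ F, coeff d g = 0 := by
      have happ : Finsupp.mapDomain (expHom M) (AddMonoidAlgebra.coeff g) (expHom M d₀) = 0 := by
        rw [← phi_apply_eq, hker]; rfl
      rw [mapDomain_apply_eq] at happ
      rw [hF, Finset.sum_filter]
      exact happ
    set h : MvPolynomial (Fin n) k :=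
      ∑ d ∈ F, C (coeff d g) * (monomial d 1 - monomial d₀ 1) with hh
    have hmem : h ∈ latticeIdealOf k M := by
      refine Ideal.sum_mem _ fun d hd => Ideal.mul_mem_left _ _ ?_
      exact binom_mem M d d₀ (Finset.mem_filter.mp hd).2
    have hphih : phi k M h = 0 := by
      rw [hh, map_sum]
      refine Finset.sum_eq_zero fun d hd => ?_
      rw [map_mul, map_sub, phi_monomial, phi_monomial,
        (Finset.mem_filter.mp hd).2, sub_self, mul_zero]
    have hcoeff : ∀ e, coeff e h = if e ∈ F then coeff e g else 0 := by
      intro e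
      rw [hh]
      simp only [coeff_sum, coeff_C_mul, coeff_sub, coeff_monomial, mul_sub]
      rw [Finset.sum_sub_distrib]
      have h1 : ∑ d ∈ F, coeff d g * (if d = e then (1:k) else 0)
          = if e ∈ F then coeff e g else 0 := by
        rw [← Finset.sum_ite_eq' F e (fun d => coeff d g)]
        exact Finset.sum_congr rfl fun d _ => by by_cases hde : d = e <;> simp [hde]
      have h2 : ∑ d ∈ F, coeff d g * (if d₀ = e then (1:k) else 0) = 0 := by
        by_cases h0 : d₀ = e
        · simp only [h0, if_pos]
          simpa using hsum
        · simp [h0]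
      rw [h1, h2, sub_zero]
    have hsupp : (g - h).support ⊆ g.support \ F := by
      intro e he
      rw [mem_support_iff, coeff_sub, hcoeff] at he
      by_cases heF : e ∈ F
      · rw [if_pos heF, sub_self] at he; exact absurd rfl he
      · rw [if_neg heF, sub_zero] at he
        exact Finset.mem_sdiff.mpr ⟨mem_support_iff.mpr he, heF⟩
    have hcard : (g - h).support.card ≤ N := by
      have h1 : (g - h).support.card ≤ (g.support \ F).card := Finset.card_le_card hsupp
      have h2 : (g.support \ F).card = g.support.card - F.card :=
        Finset.card_sdiff_of_subset (Finset.filter_subset _ _)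
      have h3 : 1 ≤ F.card := Finset.card_pos.mpr ⟨d₀, hd₀F⟩
      omega
    have hghker : phi k M (g - h) = 0 := by rw [map_sub, hker, hphih, sub_zero]
    have := ih (g - h) hcard hghker
    have : g = (g - h) + h := by ring
    rw [this]
    exact add_mem (ih (g - h) hcard hghker) hmem


lemma ker_of_mem (M : AddSubgroup (Fin n → ℤ)) (g : MvPolynomial (Fin n) k)
    (hg : g ∈ latticeIdealOf k M) : phi k M g = 0 := by
  have : latticeIdealOf k M ≤ RingHom.ker (phi k M) := by
    rw [latticeIdealOf, Ideal.span_le]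
    rintro f ⟨a, b, hab, rfl⟩
    rw [SetLike.mem_coe, RingHom.mem_ker, map_sub, phi_prodpow, phi_prodpow]
    rw [show QuotientAddGroup.mk' M (fun i => (a i : ℤ))
        = QuotientAddGroup.mk' M (fun i => (b i : ℤ)) from ?_, sub_self]
    rw [QuotientAddGroup.mk'_apply, QuotientAddGroup.mk'_apply,
      QuotientAddGroup.eq_iff_sub_mem]
    convert hab using 1; rfl
  exact this hg

lemma phi_prod_X_isUnit (M : AddSubgroup (Fin n → ℤ)) :
    IsUnit (phi k M (∏ i : Fin n, X i)) := by
  have h1 : (∏ i : Fin n, (X i : MvPolynomial (Fin n) k)) = ∏ i : Fin n, X i ^ (fun _ => 1) i := by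
    simp
  rw [h1, phi_prodpow]
  have h2 : ((QuotientAddGroup.mk' M) fun i => (((1:ℕ)):ℤ))
      = QuotientAddGroup.mk' M (fun i => (1:ℤ)) := by norm_num
  rw [h2]
  refine IsUnit.of_mul_eq_one
    (AddMonoidAlgebra.single (-(QuotientAddGroup.mk' M (fun i => (1:ℤ)))) 1) ?_
  rw [AddMonoidAlgebra.single_mul_single, add_neg_cancel, one_mul]
  rfl

lemma saturated (M : AddSubgroup (Fin n → ℤ)) (g : MvPolynomial (Fin n) k) (m : ℕ)
    (hg : (∏ i : Fin n, X i) ^ m * g ∈ latticeIdealOf k M) :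
    g ∈ latticeIdealOf k M := by
  have h0 := ker_of_mem M _ hg
  rw [map_mul, map_pow] at h0
  have hu := (phi_prod_X_isUnit (k := k) M).pow m
  rw [hu.mul_right_eq_zero] at h0
  exact mem_of_ker M _ g le_rfl h0

def satIdeal (J : Ideal (MvPolynomial (Fin n) k)) : Ideal (MvPolynomial (Fin n) k) where
  carrier := {g | ∃ m : ℕ, (∏ i : Fin n, X i) ^ m * g ∈ J}
  zero_mem' := ⟨0, by simpa using J.zero_mem⟩
  add_mem' := by
    rintro a b ⟨ma, ha⟩ ⟨mb, hb⟩
    refine ⟨ma + mb, ?_⟩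
    have : (∏ i : Fin n, (X i : MvPolynomial (Fin n) k)) ^ (ma + mb) * (a + b)
        = (∏ i : Fin n, X i) ^ mb * ((∏ i : Fin n, X i) ^ ma * a)
          + (∏ i : Fin n, X i) ^ ma * ((∏ i : Fin n, X i) ^ mb * b) := by ring
    rw [this]
    exact add_mem (J.mul_mem_left _ ha) (J.mul_mem_left _ hb)
  smul_mem' := by
    rintro c x ⟨m, hm⟩
    refine ⟨m, ?_⟩
    have : (∏ i : Fin n, (X i : MvPolynomial (Fin n) k)) ^ m * (c • x)
        = c * ((∏ i : Fin n, X i) ^ m * x) := by rw [smul_eq_mul]; ring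
    rw [this]
    exact J.mul_mem_left _ hm


lemma monNeg_mul_binom (u v : Fin n → ℤ) :
    monNeg k u * monNeg k v * (monPos k (u+v) - monNeg k (u+v))
      = monNeg k (u+v) * (monPos k v * (monPos k u - monNeg k u)
          + monNeg k u * (monPos k v - monNeg k v)) := by
  have e1 : monNeg k u * monNeg k v * monPos k (u+v)
      = monNeg k (u+v) * (monPos k u * monPos k v) := by
    simp only [monPos, monNeg, prodpow_mul]
    refine Finset.prod_congr rfl fun i _ => ?_
    congr 1
    simp only [Pi.add_apply]
    omega
  linear_combination e1

/-- Hoşten–Sturmfels: if `L` generates the lattice `M ⊆ ℤⁿ`, then the lattice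
ideal `I_M` equals the saturation
`(⟨x^{pos(u)} − x^{neg(u)} : u ∈ L⟩ : (x₁⋯xₙ)^∞)`. -/
theorem lattice_ideal_eq_saturation (M : AddSubgroup (Fin n → ℤ))
    (L : Set (Fin n → ℤ)) (hL : AddSubgroup.closure L = M)
    (g : MvPolynomial (Fin n) k) :
    g ∈ latticeIdealOf k M ↔
      ∃ m : ℕ, (∏ i : Fin n, X i) ^ m * g ∈
        Ideal.span {f | ∃ u ∈ L, f = monPos k u - monNeg k u} := by
  classical
  set J : Ideal (MvPolynomial (Fin n) k) :=
    Ideal.span {f | ∃ u ∈ L, f = monPos k u - monNeg k u} with hJ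
  constructor
  · intro hg
    set T : AddSubgroup (Fin n → ℤ) :=
      { carrier := {u | monPos k u - monNeg k u ∈ satIdeal J}
        zero_mem' := by
          have h0 : monPos k (0 : Fin n → ℤ) - monNeg k 0 = 0 := by
            simp [monPos, monNeg]
          simp only [Set.mem_setOf_eq, h0]
          exact zero_mem _
        neg_mem' := by
          intro u hu
          have h1 : monPos k (-u) = monNeg k u := by simp [monPos, monNeg]
          have h2 : monNeg k (-u) = monPos k u := by simp [monPos, monNeg]
          simp only [Set.mem_setOf_eq, h1, h2]
          have h3 : monNeg k u - monPos k u = -(monPos k u - monNeg k u) := by ring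
          rw [h3]
          exact neg_mem hu
        add_mem' := by
          intro u v hu hv
          simp only [Set.mem_setOf_eq] at hu hv ⊢
          have hR : monNeg k (u+v) * (monPos k v * (monPos k u - monNeg k u)
              + monNeg k u * (monPos k v - monNeg k v)) ∈ satIdeal J :=
            Ideal.mul_mem_left _ _
              (add_mem (Ideal.mul_mem_left _ _ hu) (Ideal.mul_mem_left _ _ hv))
          rw [← monNeg_mul_binom] at hR
          obtain ⟨m, hm⟩ := hR
          set c : Fin n → ℕ := fun i => (-u i).toNat + (-v i).toNat with hc
          have hcm : monNeg k u * monNeg k v = ∏ i : Fin n, X i ^ c i := by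
            simp only [monNeg, prodpow_mul, hc]
          set N := Finset.univ.sup c with hN
          have hNc : (∏ i : Fin n, (X i : MvPolynomial (Fin n) k) ^ (N - c i)) *
              (∏ i : Fin n, X i ^ c i) = (∏ i : Fin n, X i) ^ N := by
            rw [prodpow_mul, ← Finset.prod_pow]
            refine Finset.prod_congr rfl fun i _ => ?_
            congr 1
            have := Finset.le_sup (f := c) (Finset.mem_univ i)
            omega
          refine ⟨m + N, ?_⟩
          have key : (∏ i : Fin n, (X i : MvPolynomial (Fin n) k)) ^ (m + N) *
              (monPos k (u+v) - monNeg k (u+v))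
              = (∏ i : Fin n, X i ^ (N - c i)) *
                ((∏ i : Fin n, X i) ^ m *
                  (monNeg k u * monNeg k v * (monPos k (u+v) - monNeg k (u+v)))) := by
            rw [hcm, pow_add, ← hNc]
            ring
          rw [key]
          exact J.mul_mem_left _ hm } with hT
    have hLT : ∀ u ∈ M, monPos k u - monNeg k u ∈ satIdeal J := by
      intro u hu
      have hle : AddSubgroup.closure L ≤ T := by
        rw [AddSubgroup.closure_le]
        intro u huL
        show monPos k u - monNeg k u ∈ satIdeal J
        exact ⟨0, by rw [pow_zero, one_mul]; exact Ideal.subset_span ⟨u, huL, rfl⟩⟩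
      exact hle (hL ▸ hu)
    have hgen : latticeIdealOf k M ≤ satIdeal J := by
      rw [latticeIdealOf, Ideal.span_le]
      rintro f ⟨a, b, hab, rfl⟩
      have hmin : (∏ i : Fin n, (X i : MvPolynomial (Fin n) k) ^ (min (a i) (b i))) *
          (monPos k (fun i => (a i : ℤ) - b i) - monNeg k (fun i => (a i : ℤ) - b i))
          = (∏ i : Fin n, X i ^ a i) - ∏ i : Fin n, X i ^ b i := by
        rw [mul_sub]
        simp only [monPos, monNeg, prodpow_mul]
        congr 1
        · exact Finset.prod_congr rfl fun i _ => by congr 1; omega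
        · exact Finset.prod_congr rfl fun i _ => by congr 1; omega
      rw [SetLike.mem_coe, ← hmin]
      exact Ideal.mul_mem_left _ _ (hLT _ hab)
    exact hgen hg
  · rintro ⟨m, hm⟩
    have hJM : J ≤ latticeIdealOf k M := by
      rw [hJ, Ideal.span_le]
      rintro f ⟨u, huL, rfl⟩
      have humem : u ∈ M := hL ▸ AddSubgroup.subset_closure huL
      refine Ideal.subset_span ⟨fun i => (u i).toNat, fun i => (-u i).toNat, ?_, rfl⟩
      have heq : (fun i => (((u i).toNat : ℤ)) - (((-u i).toNat : ℤ))) = u := by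
        funext i; omega
      rw [heq]
      exact humem
    exact saturated M g m (hJM hm)


end
end
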